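/- Let p be a prime number, R = ℤ[x], and P = (p, x) ⊆ R. The submodule P·(p, x) of the free R-module R ⊕ R is not equal to the intersection of the maximal submodules of R ⊕ R containing it; in particular (p, x) lies in every maximal submodule of R ⊕ R containing P·(p,x) but (p,x) ∉ P·(p,x). -/

import Mathlib

variable {R : Type*} [CommRing R] {M : Type*} [AddCommGroup M] [Module R M]

/-- A proper submodule `P` is classical prime if `a • b • m ∈ P` implies
`a • m ∈ P` or `b • m ∈ P`. -/
def IsClassicalPrime (P : Submodule R M) : Prop :=
  P ≠ ⊤ ∧ ∀ (a b : R) (m : M), a • b • m ∈ P → a • m ∈ P ∨ b • m ∈ P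

/-- A proper submodule `P` is prime if `a • m ∈ P` implies `m ∈ P` or `a • M ⊆ P`. -/
def IsPrimeSubmodule (P : Submodule R M) : Prop :=
  P ≠ ⊤ ∧ ∀ (a : R) (m : M), a • m ∈ P → m ∈ P ∨ ∀ x : M, a • x ∈ P

/-- The ideal `(P : m) = {r : R | r • m ∈ P}`. -/
def colonElem (P : Submodule R M) (m : M) : Ideal R :=
  P.comap (LinearMap.toSpanSingleton R M m)

/-- `P` is an intersection of maximal submodules. -/
def IsIntersectionOfMaximal (P : Submodule R M) : Prop :=
  ∃ S : Set (Submodule R M), (∀ N ∈ S, IsCoatom N) ∧ P = sInf S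

/-- `M` is a classical Hilbert `R`-module. -/
def IsClHilbert (R M : Type*) [CommRing R] [AddCommGroup M] [Module R M] : Prop :=
  ∀ P : Submodule R M, IsClassicalPrime P → IsIntersectionOfMaximal P

open Polynomial in
theorem stmt7 (p : ℕ) (hp : p.Prime) :
    (∀ N : Submodule ℤ[X] (ℤ[X] × ℤ[X]), IsCoatom N →
        Submodule.map
          ((LinearMap.toSpanSingleton ℤ[X] ℤ[X] (C (p : ℤ))).prod
            (LinearMap.toSpanSingleton ℤ[X] ℤ[X] X))
          (Ideal.span {(C (p : ℤ) : ℤ[X]), X}) ≤ N →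
        ((C (p : ℤ) : ℤ[X]), (X : ℤ[X])) ∈ N) ∧
    ((C (p : ℤ) : ℤ[X]), (X : ℤ[X])) ∉
        Submodule.map
          ((LinearMap.toSpanSingleton ℤ[X] ℤ[X] (C (p : ℤ))).prod
            (LinearMap.toSpanSingleton ℤ[X] ℤ[X] X))
          (Ideal.span {(C (p : ℤ) : ℤ[X]), X}) ∧
    Submodule.map
        ((LinearMap.toSpanSingleton ℤ[X] ℤ[X] (C (p : ℤ))).prod
          (LinearMap.toSpanSingleton ℤ[X] ℤ[X] X))
        (Ideal.span {(C (p : ℤ) : ℤ[X]), X}) ≠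
      sInf {N : Submodule ℤ[X] (ℤ[X] × ℤ[X]) | IsCoatom N ∧
        Submodule.map
          ((LinearMap.toSpanSingleton ℤ[X] ℤ[X] (C (p : ℤ))).prod
            (LinearMap.toSpanSingleton ℤ[X] ℤ[X] X))
          (Ideal.span {(C (p : ℤ) : ℤ[X]), X}) ≤ N} := by
  set v : ℤ[X] × ℤ[X] := ((C (p : ℤ) : ℤ[X]), (X : ℤ[X])) with hv
  set φ := ((LinearMap.toSpanSingleton ℤ[X] ℤ[X] (C (p : ℤ))).prod
            (LinearMap.toSpanSingleton ℤ[X] ℤ[X] X)) with hφ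
  set Q := Submodule.map φ (Ideal.span {(C (p : ℤ) : ℤ[X]), X}) with hQ
  have hφz : ∀ z : ℤ[X], φ z = z • v := by
    intro z
    simp [hφ, hv, LinearMap.toSpanSingleton_apply, Prod.smul_def]
  have h1 : ∀ N : Submodule ℤ[X] (ℤ[X] × ℤ[X]), IsCoatom N → Q ≤ N → v ∈ N := by
    intro N hN hQN
    by_contra hvN
    have hpv : (C (p : ℤ)) • v ∈ N := by
      apply hQN
      exact ⟨C (p : ℤ), Ideal.subset_span (Set.mem_insert _ _), hφz _⟩
    have hxv : (X : ℤ[X]) • v ∈ N := by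
      apply hQN
      exact ⟨X, Ideal.subset_span (Set.mem_insert_of_mem _ rfl), hφz _⟩
    have htop : N ⊔ Submodule.span ℤ[X] {v} = ⊤ := by
      apply hN.2
      exact left_lt_sup.mpr (fun h => hvN (h (Submodule.mem_span_singleton_self v)))
    have h10 : ((1 : ℤ[X]), (0 : ℤ[X])) ∈ N ⊔ Submodule.span ℤ[X] {v} := by
      rw [htop]; trivial
    have h01 : ((0 : ℤ[X]), (1 : ℤ[X])) ∈ N ⊔ Submodule.span ℤ[X] {v} := by
      rw [htop]; trivial
    obtain ⟨n, hn, z, hz, hnz⟩ := Submodule.mem_sup.mp h10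
    obtain ⟨r, rfl⟩ := Submodule.mem_span_singleton.mp hz
    obtain ⟨n', hn', z', hz', hnz'⟩ := Submodule.mem_sup.mp h01
    obtain ⟨s, rfl⟩ := Submodule.mem_span_singleton.mp hz'
    apply hvN
    have e : v = (C (p : ℤ) : ℤ[X]) • (n + r • v) + (X : ℤ[X]) • (n' + s • v) := by
      rw [hnz, hnz']
      simp [hv, Prod.ext_iff]
    rw [e]
    refine add_mem ?_ ?_
    · rw [smul_add]
      refine add_mem (N.smul_mem _ hn) ?_
      rw [smul_comm]
      exact N.smul_mem _ hpv
    · rw [smul_add]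
      refine add_mem (N.smul_mem _ hn') ?_
      rw [smul_comm]
      exact N.smul_mem _ hxv
  have h2 : v ∉ Q := by
    rintro ⟨z, hz, hze⟩
    rw [hφz] at hze
    have hz1 : z = 1 := by
      have h := congrArg Prod.snd hze
      simp only [hv, Prod.smul_def, smul_eq_mul] at h
      exact mul_right_cancel₀ X_ne_zero (by rw [h, one_mul])
    rw [hz1, SetLike.mem_coe, Ideal.mem_span_pair] at hz
    obtain ⟨a, b, hab⟩ := hz
    have hev := congrArg (Polynomial.eval 0) hab
    simp at hev
    exact ((Nat.prime_iff_prime_int.mp hp)).not_isUnit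
      (IsUnit.of_mul_eq_one _ (by rw [mul_comm]; exact hev))
  refine ⟨h1, h2, ?_⟩
  intro heq
  apply h2
  rw [heq]
  exact Submodule.mem_sInf.mpr fun N hN => h1 N hN.1 hN.2
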